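/- arXiv:1506.01426 — 5 statements merged into one kernel-verified Lean document; each statement's English description precedes it below -/
import Mathlib

section
/- There exists a primitive element g in the free group F_m (m ≥ 2) with prescribed exponent sums A_i(g) = w_i for i = 1,...,m if and only if gcd(w_1, ..., w_m) = 1. -/
/-- The exponent sum of the generator `i` in a word of the free group,
packaged as a homomorphism to `Multiplicative ℤ`. -/
def expSum (m : ℕ) (i : Fin m) : FreeGroup (Fin m) →* Multiplicative ℤ :=
  FreeGroup.lift fun j => Multiplicative.ofAdd (if j = i then (1 : ℤ) else 0)

/-- An element of a group is primitive if it belongs to some generating set of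
minimal cardinality. -/
def IsPrimitiveEl {G : Type*} [Group G] (g : G) : Prop :=
  ∃ S : Finset G, g ∈ S ∧ Subgroup.closure (S : Set G) = ⊤ ∧
    ∀ T : Finset G, Subgroup.closure (T : Set G) = ⊤ → S.card ≤ T.card

def abMap (m : ℕ) : FreeGroup (Fin m) →* Multiplicative (Fin m → ℤ) :=
  FreeGroup.lift fun j => Multiplicative.ofAdd (Pi.single j 1)

def modMap (m p : ℕ) : FreeGroup (Fin m) →* Multiplicative (Fin m → ZMod p) :=
  FreeGroup.lift fun j => Multiplicative.ofAdd (Pi.single j 1)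

def castM (m p : ℕ) : Multiplicative (Fin m → ℤ) →* Multiplicative (Fin m → ZMod p) :=
  AddMonoidHom.toMultiplicative
    (AddMonoidHom.mk' (fun x i => ((x i : ℤ) : ZMod p)) (by
      intro a b; funext i; simp))

lemma expSum_eq (m : ℕ) (i : Fin m) (g : FreeGroup (Fin m)) :
    Multiplicative.toAdd (expSum m i g) = Multiplicative.toAdd (abMap m g) i := by
  have h : (AddMonoidHom.toMultiplicative (Pi.evalAddMonoidHom (fun _ : Fin m => ℤ) i)).comp
      (abMap m) = expSum m i := by
    apply FreeGroup.ext_hom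
    intro a
    simp [abMap, expSum, Pi.single_apply, eq_comm]
  have := congrArg (fun f => (f : FreeGroup (Fin m) →* Multiplicative ℤ) g) h
  simpa [abMap] using congrArg Multiplicative.toAdd this.symm

lemma modMap_eq_cast_comp (m p : ℕ) : (castM m p).comp (abMap m) = modMap m p := by
  apply FreeGroup.ext_hom
  intro a
  simp only [MonoidHom.comp_apply, abMap, modMap, FreeGroup.lift_apply_of, castM,
    AddMonoidHom.toMultiplicative_apply_apply, toAdd_ofAdd, AddMonoidHom.mk'_apply]
  congr 1
  funext i
  by_cases h : i = a <;> simp [Pi.single_apply, h]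

lemma modMap_surjective (m p : ℕ) [NeZero p] : Function.Surjective (modMap m p) := by
  intro x
  refine ⟨((List.finRange m).map
      (fun j => (FreeGroup.of j) ^ ((Multiplicative.toAdd x j).val))).prod, ?_⟩
  rw [map_list_prod, List.map_map]
  have : ∀ j : Fin m, ((modMap m p) ∘ fun j => FreeGroup.of j ^ (Multiplicative.toAdd x j).val) j
      = Multiplicative.ofAdd (Pi.single j (Multiplicative.toAdd x j)) := by
    intro j
    show (modMap m p) (FreeGroup.of j ^ (Multiplicative.toAdd x j).val) = _
    rw [map_pow]
    rw [show (modMap m p) (FreeGroup.of j) = Multiplicative.ofAdd (Pi.single j (1 : ZMod p))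
      from by simp [modMap]]
    rw [← ofAdd_nsmul]
    congr 1
    rw [← Pi.single_smul]
    simp [ZMod.natCast_val, ZMod.cast_id]
  rw [List.map_congr_left (fun j _ => this j)]
  rw [← Fin.prod_univ_def, ← ofAdd_sum]
  simp [Finset.univ_sum_single]

lemma card_ge_of_gen_zmod (m p : ℕ) [Fact p.Prime]
    (T : Finset (Multiplicative (Fin m → ZMod p)))
    (hT : Subgroup.closure (T : Set (Multiplicative (Fin m → ZMod p))) = ⊤) :
    m ≤ T.card := by
  classical
  set s : Finset (Fin m → ZMod p) := T.image Multiplicative.toAdd with hs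
  have hspan : Submodule.span (ZMod p) (s : Set (Fin m → ZMod p)) = ⊤ := by
    rw [eq_top_iff]
    intro x _
    have hx : Multiplicative.ofAdd x ∈ Subgroup.closure (T : Set _) := hT ▸ Subgroup.mem_top _
    have hle : Subgroup.closure (T : Set (Multiplicative (Fin m → ZMod p))) ≤
        (Subgroup.toAddSubgroup'.symm
          ((AddSubgroup.toZModSubmodule p).symm
            (Submodule.span (ZMod p) (s : Set (Fin m → ZMod p))))) := by
      rw [Subgroup.closure_le]
      intro t ht
      show Multiplicative.toAdd t ∈ Submodule.span (ZMod p) (s : Set (Fin m → ZMod p))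
      exact Submodule.subset_span (by
        simp only [hs, Finset.coe_image, Set.mem_image, Finset.mem_coe]
        exact ⟨t, ht, rfl⟩)
    exact hle hx
  have h1 : Module.finrank (ZMod p) (Fin m → ZMod p) = m := by
    simp [Module.finrank_pi]
  have h2 := finrank_span_le_card (R := ZMod p) (s : Set (Fin m → ZMod p))
  rw [hspan] at h2
  rw [finrank_top] at h2
  rw [h1] at h2
  rw [Finset.toFinset_coe] at h2
  exact h2.trans Finset.card_image_le

lemma m_le_card_of_gen (m : ℕ) (T : Finset (FreeGroup (Fin m)))
    (hT : Subgroup.closure (T : Set (FreeGroup (Fin m))) = ⊤) : m ≤ T.card := by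
  classical
  haveI : Fact (Nat.Prime 2) := ⟨Nat.prime_two⟩
  have key : Subgroup.closure ((T.image (modMap m 2) : Finset _) :
      Set (Multiplicative (Fin m → ZMod 2))) = ⊤ := by
    rw [Finset.coe_image, ← MonoidHom.map_closure, hT, ← MonoidHom.range_eq_map]
    exact MonoidHom.range_eq_top.mpr (modMap_surjective m 2)
  exact (card_ge_of_gen_zmod m 2 _ key).trans Finset.card_image_le

lemma closure_erase_one {G : Type*} [Group G] [DecidableEq G] (T : Finset G)
    (hT : Subgroup.closure (T : Set G) = ⊤) :
    Subgroup.closure ((T.erase 1 : Finset G) : Set G) = ⊤ := by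
  rw [eq_top_iff, ← hT, Subgroup.closure_le]
  intro x hx
  by_cases h : x = 1
  · simp [h, Subgroup.one_mem]
  · exact Subgroup.subset_closure (Finset.mem_coe.mpr (Finset.mem_erase.mpr ⟨h, hx⟩))

lemma gcd_eq_one_of_primitive (m : ℕ) (w : Fin m → ℤ) (g : FreeGroup (Fin m))
    (hg : IsPrimitiveEl g) (hw : ∀ i, Multiplicative.toAdd (abMap m g) i = w i) :
    Finset.univ.gcd w = 1 := by
  classical
  obtain ⟨S, hgS, hScl, hSmin⟩ := hg
  have hSm : S.card ≤ m := by
    have hB : Subgroup.closure ((Finset.univ.image (FreeGroup.of (α := Fin m)) : Finset _) :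
        Set (FreeGroup (Fin m))) = ⊤ := by
      rw [Finset.coe_image, Finset.coe_univ, Set.image_univ]
      exact FreeGroup.closure_range_of _
    exact (hSmin _ hB).trans (Finset.card_image_le.trans (by simp))
  by_contra hne
  have hnn : 0 ≤ Finset.univ.gcd w :=
    Int.nonneg_of_normalize_eq_self Finset.normalize_gcd
  have hnat : (Finset.univ.gcd w).natAbs ≠ 1 := by omega
  obtain ⟨p, hp, hpd⟩ := Nat.exists_prime_and_dvd hnat
  haveI : Fact p.Prime := ⟨hp⟩
  haveI : NeZero p := ⟨hp.ne_zero⟩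
  have hpw : ∀ i, (p : ℤ) ∣ w i := by
    intro i
    refine dvd_trans ?_ (Finset.gcd_dvd (Finset.mem_univ i))
    have : ((Finset.univ.gcd w).natAbs : ℤ) = Finset.univ.gcd w := Int.natAbs_of_nonneg hnn
    rw [← this]
    exact_mod_cast Int.natCast_dvd_natCast.mpr hpd
  have hψg : modMap m p g = 1 := by
    have hc := congrArg (fun f => (f : FreeGroup (Fin m) →* _) g) (modMap_eq_cast_comp m p)
    simp only [MonoidHom.comp_apply] at hc
    rw [← hc]
    apply Multiplicative.toAdd.injective
    rw [toAdd_one]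
    funext i
    simp only [castM, AddMonoidHom.toMultiplicative_apply_apply, AddMonoidHom.mk'_apply,
      Pi.zero_apply, toAdd_ofAdd]
    rw [hw i]
    exact (ZMod.intCast_zmod_eq_zero_iff_dvd _ _).mpr (hpw i)
  set T' := S.image (modMap m p) with hT'
  have hT'cl : Subgroup.closure (T' : Set (Multiplicative (Fin m → ZMod p))) = ⊤ := by
    rw [hT', Finset.coe_image, ← MonoidHom.map_closure, hScl, ← MonoidHom.range_eq_map]
    exact MonoidHom.range_eq_top.mpr (modMap_surjective m p)
  have h1T' : (1 : Multiplicative (Fin m → ZMod p)) ∈ T' := by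
    rw [hT', Finset.mem_image]
    exact ⟨g, hgS, hψg⟩
  have hkey := card_ge_of_gen_zmod m p (T'.erase 1) (closure_erase_one T' hT'cl)
  have hcard : (T'.erase 1).card = T'.card - 1 := Finset.card_erase_of_mem h1T'
  have hT'S : T'.card ≤ S.card := Finset.card_image_le
  have h1 : 1 ≤ T'.card := Finset.card_pos.mpr ⟨1, h1T'⟩
  omega

def elemAut (m : ℕ) (i j : Fin m) (s : ℤ) : FreeGroup (Fin m) →* FreeGroup (Fin m) :=
  FreeGroup.lift fun k => if k = i then FreeGroup.of i * (FreeGroup.of j) ^ s else FreeGroup.of k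

lemma elemAut_surjective (m : ℕ) (i j : Fin m) (hij : i ≠ j) (s : ℤ) :
    Function.Surjective (elemAut m i j s) := by
  rw [← MonoidHom.range_eq_top, eq_top_iff, ← FreeGroup.closure_range_of (Fin m),
    Subgroup.closure_le]
  rintro _ ⟨k, rfl⟩
  by_cases hk : k = i
  · rw [hk]
    have h1 : FreeGroup.of j ∈ (elemAut m i j s).range :=
      ⟨FreeGroup.of j, by simp [elemAut, if_neg (Ne.symm hij)]⟩
    have h2 : FreeGroup.of i * FreeGroup.of j ^ s ∈ (elemAut m i j s).range :=
      ⟨FreeGroup.of i, by simp [elemAut]⟩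
    have h3 := mul_mem h2 (inv_mem (zpow_mem h1 s))
    simpa using h3
  · exact ⟨FreeGroup.of k, by simp [elemAut, hk]⟩

lemma abMap_elemAut (m : ℕ) (i j : Fin m) (s : ℤ) (hij : i ≠ j) (x : FreeGroup (Fin m)) :
    Multiplicative.toAdd (abMap m (elemAut m i j s x)) =
      Multiplicative.toAdd (abMap m x)
        + (Multiplicative.toAdd (abMap m x) i) • (s • Pi.single j (1 : ℤ)) := by
  set Tm : Multiplicative (Fin m → ℤ) →* Multiplicative (Fin m → ℤ) :=
    AddMonoidHom.toMultiplicative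
      (AddMonoidHom.mk' (fun x : Fin m → ℤ => x + x i • (s • Pi.single j (1 : ℤ))) (by
        intro a b
        simp only [Pi.add_apply, add_smul]
        abel)) with hTm
  have key : (abMap m).comp (elemAut m i j s) = Tm.comp (abMap m) := by
    apply FreeGroup.ext_hom
    intro k
    simp only [MonoidHom.comp_apply, elemAut, abMap, FreeGroup.lift_apply_of, hTm,
      AddMonoidHom.toMultiplicative_apply_apply, toAdd_ofAdd, AddMonoidHom.mk'_apply]
    by_cases hk : k = i
    · subst hk
      rw [if_pos rfl, map_mul, map_zpow]
      simp only [FreeGroup.lift_apply_of]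
      rw [← ofAdd_zsmul, ← ofAdd_add]
      congr 1
      simp [Pi.single_apply]
    · rw [if_neg hk]
      simp only [FreeGroup.lift_apply_of]
      congr 1
      simp [Pi.single_apply, hk]
  have := congrArg (fun f => (f : FreeGroup (Fin m) →* _) x) key
  simp only [MonoidHom.comp_apply] at this
  rw [this]
  simp [hTm]

lemma exists_tuple (m : ℕ) (hm : 0 < m) :
    ∀ n : ℕ, ∀ w : Fin m → ℤ, (∑ i, (w i).natAbs) = n → Finset.univ.gcd w ∣ 1 →
    ∃ g : Fin m → FreeGroup (Fin m), Subgroup.closure (Set.range g) = ⊤ ∧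
      Multiplicative.toAdd (abMap m (g ⟨0, hm⟩)) = w := by
  intro n
  induction n using Nat.strong_induction_on with
  | _ n IH =>
  intro w hsum hgcd
  classical
  by_cases hstep : ∃ i j : Fin m, i ≠ j ∧ w i ≠ 0 ∧ w j ≠ 0 ∧ (w i).natAbs ≤ (w j).natAbs
  · obtain ⟨i, j, hij, hwi, hwj, hle⟩ := hstep
    set s : ℤ := (if 0 ≤ w i then 1 else -1) * (if 0 ≤ w j then 1 else -1) with hs
    set w' : Fin m → ℤ := Function.update w j (w j - s * w i) with hw'
    have habs : (w j - s * w i).natAbs = (w j).natAbs - (w i).natAbs := by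
      rcases le_or_gt 0 (w i) with h1 | h1 <;> rcases le_or_gt 0 (w j) with h2 | h2
      · rw [hs, if_pos h1, if_pos h2]; simp only [one_mul, mul_one]; omega
      · rw [hs, if_pos h1, if_neg (not_le.mpr h2)]; simp only [one_mul, mul_neg_one, neg_mul,
          sub_neg_eq_add]; omega
      · rw [hs, if_neg (not_le.mpr h1), if_pos h2]; simp only [neg_one_mul, mul_one, neg_mul,
          sub_neg_eq_add, one_mul]; omega
      · rw [hs, if_neg (not_le.mpr h1), if_neg (not_le.mpr h2)]; simp only [neg_one_mul,
          mul_neg_one, neg_neg, one_mul, mul_one]; omega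
    have hupdabs : (fun k => (w' k).natAbs)
        = Function.update (fun k => (w k).natAbs) j (w j - s * w i).natAbs := by
      funext k
      by_cases hkj : k = j
      · subst hkj; simp [hw']
      · simp [hw', Function.update_of_ne hkj]
    have hsum1 : ∑ k, (w' k).natAbs
        = (w j - s * w i).natAbs + ∑ k ∈ Finset.univ \ {j}, (w k).natAbs := by
      rw [show ∑ k, (w' k).natAbs = ∑ k, (fun k => (w' k).natAbs) k from rfl, hupdabs]
      exact Finset.sum_update_of_mem (Finset.mem_univ j) _ _
    have hsum2 : ∑ k, (w k).natAbs
        = ∑ k ∈ Finset.univ \ {j}, (w k).natAbs + (w j).natAbs :=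
      Finset.sum_eq_sum_sdiff_singleton_add (Finset.mem_univ j) _
    have hwin : (w i).natAbs ≠ 0 := fun h => hwi (Int.natAbs_eq_zero.mp h)
    have hlt : ∑ k, (w' k).natAbs < n := by omega
    have hgcd' : Finset.univ.gcd w' ∣ 1 := by
      refine dvd_trans (Finset.dvd_gcd (fun k _ => ?_)) hgcd
      by_cases hkj : k = j
      · rw [hkj]
        have h1 : Finset.univ.gcd w' ∣ w' j := Finset.gcd_dvd (Finset.mem_univ j)
        have h2 : Finset.univ.gcd w' ∣ w' i := Finset.gcd_dvd (Finset.mem_univ i)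
        rw [hw', Function.update_self] at h1
        rw [hw', Function.update_of_ne hij] at h2
        have h3 := dvd_add h1 (Dvd.dvd.mul_left h2 s)
        simpa using h3
      · have h1 : Finset.univ.gcd w' ∣ w' k := Finset.gcd_dvd (Finset.mem_univ k)
        rwa [hw', Function.update_of_ne hkj] at h1
    obtain ⟨g', hg'cl, hg'ab⟩ := IH _ hlt w' rfl hgcd'
    refine ⟨fun k => elemAut m i j s (g' k), ?_, ?_⟩
    · have hrange : Set.range (fun k => elemAut m i j s (g' k))
          = (elemAut m i j s) '' Set.range g' := by
        rw [← Set.range_comp]; rfl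
      rw [hrange, ← MonoidHom.map_closure, hg'cl, ← MonoidHom.range_eq_map]
      exact MonoidHom.range_eq_top.mpr (elemAut_surjective m i j hij s)
    · rw [abMap_elemAut m i j s hij, hg'ab]
      funext k
      by_cases hkj : k = j
      · subst hkj
        simp only [Pi.add_apply, hw', Function.update_self, Function.update_of_ne hij,
          Pi.smul_apply, Pi.single_eq_same, smul_eq_mul, mul_one]
        ring
      · simp only [Pi.add_apply, hw', Function.update_of_ne hkj, Pi.smul_apply,
          Pi.single_apply, if_neg hkj, smul_eq_mul, mul_zero, add_zero]
  · have hex : ∃ i, w i ≠ 0 := by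
      by_contra h
      push_neg at h
      have hz : Finset.univ.gcd w = 0 := Finset.gcd_eq_zero_iff.mpr (fun i _ => h i)
      rw [hz] at hgcd
      exact absurd hgcd (by norm_num)
    obtain ⟨i, hi⟩ := hex
    have hzero : ∀ k, k ≠ i → w k = 0 := by
      intro k hk
      by_contra h
      rcases le_total (w k).natAbs (w i).natAbs with h1 | h1
      · exact hstep ⟨k, i, hk, h, hi, h1⟩
      · exact hstep ⟨i, k, Ne.symm hk, hi, h, h1⟩
    have hdvd : w i ∣ 1 := by
      refine dvd_trans (Finset.dvd_gcd fun k _ => ?_) hgcd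
      by_cases hk : k = i
      · subst hk; exact dvd_refl _
      · rw [hzero k hk]; exact dvd_zero _
    have hpm : w i = 1 ∨ w i = -1 := Int.isUnit_iff.mp (isUnit_of_dvd_one hdvd)
    set z : Fin m := ⟨0, hm⟩ with hzdef
    set g0 : Fin m → FreeGroup (Fin m) :=
      fun k => if k = z then (FreeGroup.of i) ^ (w i) else FreeGroup.of ((Equiv.swap z i) k)
      with hg0
    refine ⟨g0, ?_, ?_⟩
    · rw [eq_top_iff, ← FreeGroup.closure_range_of (Fin m), Subgroup.closure_le]
      rintro _ ⟨k, rfl⟩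
      by_cases hk : k = i
      · rw [hk]
        have hmem : (FreeGroup.of i : FreeGroup (Fin m)) ^ (w i)
            ∈ Subgroup.closure (Set.range g0) :=
          Subgroup.subset_closure ⟨z, by simp [hg0]⟩
        rcases hpm with h | h
        · rw [h, zpow_one] at hmem; exact hmem
        · rw [h, zpow_neg_one] at hmem
          exact (Subgroup.inv_mem_iff _).mp hmem
      · have hswap : (Equiv.swap z i) k ≠ z := by
          intro hcon
          apply hk
          have h2 := congrArg (Equiv.swap z i) hcon
          rwa [Equiv.swap_apply_self, Equiv.swap_apply_left] at h2
        refine Subgroup.subset_closure ⟨(Equiv.swap z i) k, ?_⟩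
        rw [hg0]
        simp only
        rw [if_neg hswap, Equiv.swap_apply_self]
    · have hg0z : g0 z = FreeGroup.of i ^ w i := by simp [hg0]
      rw [hg0z]
      rw [map_zpow,
        show (abMap m) (FreeGroup.of i) = Multiplicative.ofAdd (Pi.single i 1) from by
          simp [abMap],
        ← ofAdd_zsmul, toAdd_ofAdd]
      funext k
      by_cases hk : k = i
      · subst hk; simp
      · simp [Pi.single_apply, hk, hzero k hk]


/-- There is a primitive element of `F_m` with prescribed exponent sums `w i`
if and only if `gcd (w 1, …, w m) = 1`. -/
theorem primitive_with_weights_iff_gcd_one (m : ℕ) (hm : 2 ≤ m) (w : Fin m → ℤ) :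
    (∃ g : FreeGroup (Fin m), IsPrimitiveEl g ∧
        ∀ i : Fin m, Multiplicative.toAdd (expSum m i g) = w i)
      ↔ Finset.univ.gcd w = 1 := by
  constructor
  · rintro ⟨g, hg, hw⟩
    exact gcd_eq_one_of_primitive m w g hg (fun i => by rw [← expSum_eq]; exact hw i)
  · intro hgcd
    classical
    have hm0 : 0 < m := by omega
    obtain ⟨g, hcl, hab⟩ := exists_tuple m hm0 _ w rfl (by rw [hgcd])
    refine ⟨g ⟨0, hm0⟩, ⟨Finset.univ.image g,
      Finset.mem_image_of_mem g (Finset.mem_univ _), ?_, ?_⟩, ?_⟩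
    · rw [Finset.coe_image, Finset.coe_univ, Set.image_univ]; exact hcl
    · intro T hT
      exact le_trans (Finset.card_image_le.trans (by simp)) (m_le_card_of_gen m T hT)
    · intro i; rw [expSum_eq, hab]
end

section
/- Let K be a subgroup of Z^m generated by r vectors, and let d be the gcd of all rm coordinate entries of the generating vectors. Then d = min over nonzero w ∈ K of gcd(w), i.e., there exists a vector in K whose entries have gcd equal to d, and every nonzero vector of K has entries with gcd divisible by d. In particular, K contains a primitive vector if and only if the gcd of all rm entries is 1. -/
private lemma int_finset_gcd_nonneg {α : Type*} (s : Finset α) (f : α → ℤ) :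
    0 ≤ s.gcd f := by
  rw [← Finset.normalize_gcd, ← Int.abs_eq_normalize]
  exact abs_nonneg _

/-- The gcd of the coordinates of `w` divides every coordinate of `w` in any basis. -/
private lemma gcd_dvd_repr {m : ℕ} (b : Module.Basis (Fin m) ℤ (Fin m → ℤ)) (w : Fin m → ℤ)
    (k : Fin m) : Finset.univ.gcd w ∣ b.repr w k := by
  classical
  have h : b.repr w = ∑ i, w i • b.repr (fun j => if i = j then (1 : ℤ) else 0) := by
    conv_lhs => rw [pi_eq_sum_univ w]
    rw [map_sum]
    exact Finset.sum_congr rfl fun i _ => (map_smul _ _ _)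
  rw [h]
  simp only [Finsupp.coe_finset_sum, Finset.sum_apply, Finsupp.smul_apply, smul_eq_mul]
  exact Finset.dvd_sum fun i _ => (Finset.gcd_dvd (Finset.mem_univ i)).mul_right _

/-- Criterion for the existence of a primitive vector: let `K ≤ ℤ^m` be generated by
`r` vectors and let `d` be the gcd of all `r·m` coordinate entries.  Then some vector
of `K` has entries with gcd exactly `d`, every nonzero vector of `K` has entries whose
gcd is divisible by `d`, and `K` contains a primitive vector iff `d = 1`. -/
theorem gcd_span_criterion (m r : ℕ) (v : Fin r → Fin m → ℤ) :
    let K := AddSubgroup.closure (Set.range v)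
    let d := Finset.univ.gcd (fun p : Fin r × Fin m => v p.1 p.2)
    (∃ w ∈ K, Finset.univ.gcd w = d) ∧
    (∀ w ∈ K, w ≠ 0 → d ∣ Finset.univ.gcd w) ∧
    ((∃ w ∈ K, Finset.univ.gcd w = 1) ↔ d = 1) := by
  intro K d
  classical
  set N : Submodule ℤ (Fin m → ℤ) := Submodule.span ℤ (Set.range v) with hN
  have hKN : ∀ w : Fin m → ℤ, w ∈ K ↔ w ∈ N := by
    intro w
    have : N.toAddSubgroup = K := Submodule.span_int_eq_addSubgroupClosure _
    rw [← this]
    rfl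
  -- `d` divides every coordinate of every element of `N`
  have hdN : ∀ x ∈ N, ∀ j, d ∣ x j := by
    intro x hx
    refine Submodule.span_induction (p := fun x _ => ∀ j, d ∣ x j) ?_ ?_ ?_ ?_ hx
    · rintro _ ⟨i, rfl⟩ j
      exact Finset.gcd_dvd (Finset.mem_univ (i, j))
    · intro j; exact dvd_zero d
    · intro a b _ _ ha hb j; exact dvd_add (ha j) (hb j)
    · intro c a _ ha j; exact (ha j).mul_left c
  obtain ⟨n, snf⟩ := N.smithNormalForm (Pi.basisFun ℤ (Fin m))
  set g : ℤ := Finset.univ.gcd snf.a with hg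
  -- `g` divides every coordinate of every element of `N`
  have hA : ∀ x ∈ N, ∀ j, g ∣ x j := by
    intro x hx j
    obtain ⟨c, rfl⟩ := snf.bN.mem_submodule_iff'.mp hx
    simp only [Finset.sum_apply, Pi.smul_apply, smul_eq_mul]
    refine Finset.dvd_sum fun i _ => ?_
    have hsnf : ((snf.bN i : Fin m → ℤ)) = snf.a i • snf.bM (snf.f i) := snf.snf i
    rw [hsnf]
    simp only [Pi.smul_apply, smul_eq_mul]
    exact ((Finset.gcd_dvd (Finset.mem_univ i)).mul_right _).mul_left _
  -- the witness vector
  set w₀ : Fin m → ℤ := ∑ i : Fin n, ((snf.bN i : Fin m → ℤ)) with hw₀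
  have hw₀N : w₀ ∈ N := by
    rw [hw₀]
    exact Submodule.sum_mem _ fun i _ => (snf.bN i).2
  have hrepr : ∀ i₀ : Fin n, snf.bM.repr w₀ (snf.f i₀) = snf.a i₀ := by
    intro i₀
    have h : snf.bM.repr w₀ = ∑ i : Fin n, snf.a i • Finsupp.single (snf.f i) (1 : ℤ) := by
      rw [hw₀, map_sum]
      refine Finset.sum_congr rfl fun i _ => ?_
      rw [snf.snf i, map_smul, Module.Basis.repr_self]
    rw [h]
    simp only [Finsupp.coe_finset_sum, Finset.sum_apply, Finsupp.smul_apply,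
      Finsupp.single_apply, smul_eq_mul, mul_ite, mul_one, mul_zero,
      EmbeddingLike.apply_eq_iff_eq]
    simp [Finset.sum_ite_eq' Finset.univ i₀ snf.a]
  -- gcd of w₀ equals g
  have hgw : Finset.univ.gcd w₀ = g := by
    refine Int.dvd_antisymm (int_finset_gcd_nonneg _ _) (int_finset_gcd_nonneg _ _) ?_ ?_
    · refine Finset.dvd_gcd fun i _ => ?_
      rw [← hrepr i]
      exact gcd_dvd_repr snf.bM w₀ (snf.f i)
    · exact Finset.dvd_gcd fun j _ => hA w₀ hw₀N j
  -- g = d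
  have hgd : g = d := by
    refine Int.dvd_antisymm (int_finset_gcd_nonneg _ _) (int_finset_gcd_nonneg _ _) ?_ ?_
    · exact Finset.dvd_gcd fun p _ =>
        hA (v p.1) (Submodule.subset_span ⟨p.1, rfl⟩) p.2
    · rw [← hgw]
      exact Finset.dvd_gcd fun j _ => hdN w₀ hw₀N j
  have hpart1 : ∃ w ∈ K, Finset.univ.gcd w = d :=
    ⟨w₀, (hKN w₀).mpr hw₀N, by rw [hgw, hgd]⟩
  have hpart2 : ∀ w ∈ K, d ∣ Finset.univ.gcd w := fun w hw =>
    Finset.dvd_gcd fun j _ => hdN w ((hKN w).mp hw) j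
  refine ⟨hpart1, fun w hw _ => hpart2 w hw, ?_, ?_⟩
  · rintro ⟨w, hw, hw1⟩
    have hd1 : d ∣ 1 := hw1 ▸ hpart2 w hw
    have hnn : (0:ℤ) ≤ d := int_finset_gcd_nonneg _ _
    rcases Int.isUnit_iff.mp (isUnit_of_dvd_one hd1) with h | h
    · exact h
    · omega
  · intro h
    rw [← h]
    exact hpart1
end

section
/- Let H be the free s-step nilpotent group of rank m and K a normal subgroup of H. If the rank of H/K is strictly less than m, then K contains an element whose abelianization is a primitive vector of Z^m. -/
/-- The free `s`-step nilpotent group on `m` generators. -/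
abbrev FreeNilpotentGroup (s m : ℕ) :=
  FreeGroup (Fin m) ⧸ (⊤ : Subgroup (FreeGroup (Fin m))).lowerCentralSeries s

/-- The `i`-th abelianization coordinate of an element of the free nilpotent group. -/
def coordMap (s m : ℕ) (hs : 1 ≤ s) (i : Fin m) :
    FreeNilpotentGroup s m →* Multiplicative ℤ :=
  QuotientGroup.lift _ (expSum m i) (by
    intro x hx
    have h1 : (⊤ : Subgroup (FreeGroup (Fin m))).lowerCentralSeries s ≤
        (⊤ : Subgroup (FreeGroup (Fin m))).lowerCentralSeries 1 := Subgroup.lowerCentralSeries_antitone _ hs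
    have h2 : (⊤ : Subgroup (FreeGroup (Fin m))).lowerCentralSeries 1 ≤ (expSum m i).ker := by
      rw [Subgroup.top_lowerCentralSeries_one]
      exact Abelianization.commutator_subset_ker (expSum m i)
    exact h2 (h1 hx))

/-- The rank of a group: the minimal cardinality of a (finite) generating set,
as an extended natural number. -/
noncomputable def rankOf (G : Type*) [Group G] : ℕ∞ :=
  ⨅ (S : Finset G) (_ : Subgroup.closure (S : Set G) = ⊤), (S.card : ℕ∞)

section Aux

-- Bezout for Finset.gcd over ℤ
lemma finset_gcd_bezout {ι : Type*} [DecidableEq ι] (t : Finset ι) (a : ι → ℤ) :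
    ∃ c : ι → ℤ, ∑ i ∈ t, c i * a i = t.gcd a := by
  classical
  induction t using Finset.induction_on with
  | empty => exact ⟨0, by simp⟩
  | @insert j t hj ih =>
    obtain ⟨c, hc⟩ := ih
    set g := t.gcd a with hg
    refine ⟨Function.update (fun i => Int.gcdB (a j) g * c i) j (Int.gcdA (a j) g), ?_⟩
    rw [Finset.sum_insert hj, Finset.gcd_insert]
    rw [Function.update_self]
    have hsum : ∑ i ∈ t, Function.update (fun i => Int.gcdB (a j) g * c i) j (Int.gcdA (a j) g) i * a i
        = Int.gcdB (a j) g * ∑ i ∈ t, c i * a i := by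
      rw [Finset.mul_sum]
      refine Finset.sum_congr rfl fun i hi => ?_
      rw [Function.update_of_ne (by rintro rfl; exact hj hi)]
      ring
    rw [hsum, hc, ← hg]
    rw [← Int.coe_gcd, Int.gcd_eq_gcd_ab]
    ring

lemma gcd_dvd_linearMap_apply {m : ℕ} (v : Fin m → ℤ) (lam : (Fin m → ℤ) →ₗ[ℤ] ℤ) :
    Finset.univ.gcd v ∣ lam v := by
  rw [LinearMap.pi_apply_eq_sum_univ lam v]
  refine Finset.dvd_sum fun j _ => ?_
  exact Dvd.dvd.mul_right (Finset.gcd_dvd (Finset.mem_univ j)) _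

lemma finset_gcd_eq_one_of_dvd_one {ι : Type*} {t : Finset ι} {a : ι → ℤ}
    (h : t.gcd a ∣ 1) : t.gcd a = 1 := by
  have h0 : 0 ≤ t.gcd a := by
    rw [← Finset.normalize_gcd, ← Int.abs_eq_normalize]; exact abs_nonneg _
  exact Int.eq_one_of_dvd_one h0 h

end Aux

/-- Killing a primitive element: if `K` is a normal subgroup of the free `s`-step
nilpotent group of rank `m` and the quotient has rank `< m`, then `K` contains an
element whose abelianization is a primitive vector of `ℤ^m`. -/
theorem normal_subgroup_contains_primitive_of_rank_lt (s m : ℕ) (hs : 1 ≤ s)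
    (K : Subgroup (FreeNilpotentGroup s m)) [K.Normal]
    (h : rankOf (FreeNilpotentGroup s m ⧸ K) < (m : ℕ∞)) :
    ∃ x ∈ K,
      Finset.univ.gcd (fun i => Multiplicative.toAdd (coordMap s m hs i x)) = 1 := by
  classical
  -- Step 0: a small generating set of the quotient
  obtain ⟨S, hSgen, hScard⟩ : ∃ S : Finset (FreeNilpotentGroup s m ⧸ K),
      Subgroup.closure (S : Set (FreeNilpotentGroup s m ⧸ K)) = ⊤ ∧ S.card < m := by
    rw [rankOf, iInf_lt_iff] at h
    obtain ⟨S, hS⟩ := h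
    rw [iInf_lt_iff] at hS
    obtain ⟨h1, h2⟩ := hS
    exact ⟨S, h1, by exact_mod_cast h2⟩
  -- the abelianization coordinates map
  set f' : FreeNilpotentGroup s m → (Fin m → ℤ) :=
    fun x j => Multiplicative.toAdd (coordMap s m hs j x) with hf'
  have f'_one : f' 1 = 0 := by funext j; simp [hf']
  have f'_mul : ∀ x y, f' (x * y) = f' x + f' y := by
    intro x y; funext j; simp [hf']
  have f'_inv : ∀ x, f' x⁻¹ = - f' x := by
    intro x; funext j; simp [hf']
  -- image of K in ℤ^m
  let Lgrp : AddSubgroup (Fin m → ℤ) :=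
    { carrier := {v | ∃ x ∈ K, f' x = v}
      zero_mem' := ⟨1, K.one_mem, f'_one⟩
      add_mem' := by rintro v w ⟨x, hx, rfl⟩ ⟨y, hy, rfl⟩
                     exact ⟨x * y, K.mul_mem hx hy, f'_mul x y⟩
      neg_mem' := by rintro v ⟨x, hx, rfl⟩
                     exact ⟨x⁻¹, K.inv_mem hx, f'_inv x⟩ }
  let L : Submodule ℤ (Fin m → ℤ) := Lgrp.toIntSubmodule
  -- Key fact: for every prime p, K has an element whose image is not divisible by p
  have key : ∀ p : ℕ, p.Prime → ¬ (∀ v ∈ L, ∀ j, (p : ℤ) ∣ v j) := by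
    intro p hp hdiv
    haveI : Fact p.Prime := ⟨hp⟩
    -- the mod-p coordinate map on the big group
    let θ₀ : FreeNilpotentGroup s m →* Multiplicative (Fin m → ZMod p) :=
      { toFun := fun x => Multiplicative.ofAdd fun j => ((f' x j : ℤ) : ZMod p)
        map_one' := by
          simp only [f'_one, Pi.zero_apply, Int.cast_zero]
          rfl
        map_mul' := by
          intro x y
          simp only [f'_mul, Pi.add_apply, Int.cast_add]
          rfl }
    have hker : ∀ x ∈ K, θ₀ x = 1 := by
      intro x hx
      have hzero : (fun j => ((f' x j : ℤ) : ZMod p)) = (0 : Fin m → ZMod p) := by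
        funext j
        rw [Pi.zero_apply, ZMod.intCast_zmod_eq_zero_iff_dvd]
        exact hdiv (f' x) ⟨x, hx, rfl⟩ j
      change Multiplicative.ofAdd (fun j => ((f' x j : ℤ) : ZMod p)) = 1
      rw [hzero, ofAdd_zero]
    let θ : (FreeNilpotentGroup s m ⧸ K) →* Multiplicative (Fin m → ZMod p) :=
      QuotientGroup.lift K θ₀ hker
    have hθ₀surj : Function.Surjective θ₀ := by
      intro w
      set e : Fin m → ℕ := fun i => (Multiplicative.toAdd w i).val with he
      set g : FreeGroup (Fin m) :=
        ((List.finRange m).map (fun i => FreeGroup.of i ^ e i)).prod with hg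
      refine ⟨QuotientGroup.mk g, ?_⟩
      have hcoord : ∀ j, f' (QuotientGroup.mk g) j = (e j : ℤ) := by
        intro j
        show Multiplicative.toAdd (coordMap s m hs j (QuotientGroup.mk g)) = (e j : ℤ)
        have h1 : coordMap s m hs j (QuotientGroup.mk g) = expSum m j g :=
          QuotientGroup.lift_mk _ _ _
        rw [h1, hg, map_list_prod, List.map_map, ← Fin.prod_univ_def, toAdd_prod]
        have h2 : ∀ i, Multiplicative.toAdd
            ((⇑(expSum m j) ∘ fun i => FreeGroup.of i ^ e i) i)
            = (if i = j then (e i : ℤ) else 0) := by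
          intro i
          simp only [Function.comp_apply, map_pow, toAdd_pow, expSum, FreeGroup.lift_apply_of,
            toAdd_ofAdd]
          by_cases hij : i = j
          · simp [hij]
          · simp [hij]
        rw [Finset.sum_congr rfl fun i _ => h2 i]
        simp
      have hfun : (fun j => ((f' (QuotientGroup.mk g) j : ℤ) : ZMod p))
          = Multiplicative.toAdd w := by
        funext j
        rw [hcoord j, he]
        simp only [Int.cast_natCast]
        rw [ZMod.natCast_val, ZMod.cast_id]
      change Multiplicative.ofAdd (fun j => ((f' (QuotientGroup.mk g) j : ℤ) : ZMod p)) = w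
      rw [hfun, ofAdd_toAdd]
    have hθsurj : Function.Surjective θ := by
      intro w; obtain ⟨x, hx⟩ := hθ₀surj w
      exact ⟨QuotientGroup.mk x, hx⟩
    -- the images of S generate (ZMod p)^m
    have hclos : Subgroup.closure (θ '' (S : Set (FreeNilpotentGroup s m ⧸ K))) = ⊤ := by
      rw [← MonoidHom.map_closure, hSgen, ← MonoidHom.range_eq_map]
      exact MonoidHom.range_eq_top.mpr hθsurj
    set T : Finset (Fin m → ZMod p) := S.image (fun x => Multiplicative.toAdd (θ x)) with hT
    have hspan : Submodule.span (ZMod p) (T : Set (Fin m → ZMod p)) = ⊤ := by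
      rw [eq_top_iff]
      intro v _
      have hsub : Subgroup.closure (θ '' (S : Set (FreeNilpotentGroup s m ⧸ K))) ≤
          AddSubgroup.toSubgroup
            ((Submodule.span (ZMod p) (T : Set (Fin m → ZMod p))).toAddSubgroup) := by
        rw [Subgroup.closure_le]
        rintro y ⟨x, hxS, rfl⟩
        show Multiplicative.toAdd (θ x) ∈ Submodule.span (ZMod p) (T : Set (Fin m → ZMod p))
        refine Submodule.subset_span ?_
        rw [hT]
        simp only [Finset.coe_image, Set.mem_image, Finset.mem_coe]
        exact ⟨x, hxS, rfl⟩
      have hmem : Multiplicative.ofAdd v ∈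
          AddSubgroup.toSubgroup
            ((Submodule.span (ZMod p) (T : Set (Fin m → ZMod p))).toAddSubgroup) := by
        apply hsub
        rw [hclos]
        trivial
      exact hmem
    have hrank : (m : ℕ) ≤ T.card := by
      have h1 : Module.finrank (ZMod p) (Fin m → ZMod p) = m := by
        simp [Module.finrank_pi]
      have h2 : Module.finrank (ZMod p) (Fin m → ZMod p) ≤ T.card := by
        rw [← finrank_top (ZMod p) (Fin m → ZMod p), ← hspan]
        exact finrank_span_finset_le_card T
      omega
    have hle := Finset.card_image_le (s := S) (f := fun x => Multiplicative.toAdd (θ x))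
    rw [← hT] at hle
    omega
  -- Smith normal form of L
  obtain ⟨n, ⟨bM, bN, femb, a, hsnf⟩⟩ := L.smithNormalForm (Pi.basisFun ℤ (Fin m))
  -- gcd of the diagonal entries is 1
  have hga : Finset.univ.gcd a = 1 := by
    by_contra hne
    have hnatAbs : (Finset.univ.gcd a).natAbs ≠ 1 := by
      intro h1
      have h0 : 0 ≤ Finset.univ.gcd a := by
        rw [← Finset.normalize_gcd, ← Int.abs_eq_normalize]; exact abs_nonneg _
      omega
    obtain ⟨q, hq, hqd⟩ := Int.exists_prime_and_dvd hnatAbs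
    have hqa : ∀ i, q ∣ a i := fun i => hqd.trans (Finset.gcd_dvd (Finset.mem_univ i))
    refine key q.natAbs (Int.prime_iff_natAbs_prime.mp hq) ?_
    intro v hv j
    rw [Int.natAbs_dvd]
    have hv' : v = ∑ i, bN.repr ⟨v, hv⟩ i • (a i • bM (femb i)) := by
      conv_lhs => rw [show v = ((⟨v, hv⟩ : L) : Fin m → ℤ) from rfl,
        ← bN.sum_repr ⟨v, hv⟩]
      push_cast
      refine Finset.sum_congr rfl fun i _ => ?_
      rw [hsnf i]
    rw [hv']
    simp only [Finset.sum_apply, Pi.smul_apply, smul_eq_mul]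
    refine Finset.dvd_sum fun i _ => ?_
    exact Dvd.dvd.mul_left (Dvd.dvd.mul_right (hqa i) _) _
  -- the witness: sum of the basis vectors of L
  set v : Fin m → ℤ := ∑ i, ((bN i : Fin m → ℤ)) with hv
  have hvL : v ∈ L := Submodule.sum_mem L fun i _ => (bN i).2
  obtain ⟨x, hxK, hxv⟩ := hvL
  refine ⟨x, hxK, ?_⟩
  -- build the functional
  obtain ⟨c, hc⟩ := finset_gcd_bezout Finset.univ a
  rw [hga] at hc
  let lam : (Fin m → ℤ) →ₗ[ℤ] ℤ := ∑ i, c i • bM.coord (femb i)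
  have hlamv : lam v = 1 := by
    have hrepr : ∀ i, bM.repr v (femb i) = a i := by
      intro i
      have hveq : v = ∑ i', a i' • bM (femb i') := by
        rw [hv]
        exact Finset.sum_congr rfl fun i' _ => hsnf i'
      have hterm : ∀ i', (bM.repr (a i' • bM (femb i'))) (femb i)
          = if i' = i then a i else 0 := by
        intro i'
        rw [map_smul, Finsupp.smul_apply, Module.Basis.repr_self, Finsupp.single_apply]
        by_cases hii : i' = i
        · subst hii; simp
        · rw [if_neg (fun hcon => hii (femb.injective hcon)), if_neg hii, smul_zero]
      rw [hveq, map_sum, Finset.sum_apply']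
      rw [Finset.sum_congr rfl fun i' _ => hterm i']
      simp
    show (∑ i, c i • bM.coord (femb i)) v = 1
    rw [LinearMap.sum_apply]
    simp only [LinearMap.smul_apply, Module.Basis.coord_apply, smul_eq_mul]
    rw [Finset.sum_congr rfl fun i _ => by rw [hrepr i]]
    exact hc
  have hgcd : Finset.univ.gcd v ∣ 1 := hlamv ▸ gcd_dvd_linearMap_apply v lam
  have : (fun i => Multiplicative.toAdd (coordMap s m hs i x)) = v := hxv
  rw [this]
  exact finset_gcd_eq_one_of_dvd_one hgcd
end

section
/- Suppose u_1,...,u_n ∈ Z^m and v is a primitive vector lying in the Z-span of u_1,...,u_n. Then there exist v_2,...,v_n ∈ Z^m such that the Z-span of {v, v_2, ..., v_n} equals the Z-span of {u_1, ..., u_n}. -/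
private lemma bezout_finset {ι : Type*} [DecidableEq ι] (s : Finset ι) (v : ι → ℤ) :
    ∃ c : ι → ℤ, ∑ i ∈ s, c i * v i = s.gcd v := by
  induction s using Finset.induction_on with
  | empty => exact ⟨0, by simp⟩
  | @insert i s hi ih =>
    obtain ⟨c, hc⟩ := ih
    refine ⟨Function.update (fun k => Int.gcdB (v i) (s.gcd v) * c k) i
      (Int.gcdA (v i) (s.gcd v)), ?_⟩
    rw [Finset.sum_insert hi, Finset.gcd_insert, Function.update_self]
    have h1 : ∑ k ∈ s, Function.update (fun k => Int.gcdB (v i) (s.gcd v) * c k) i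
        (Int.gcdA (v i) (s.gcd v)) k * v k
        = Int.gcdB (v i) (s.gcd v) * ∑ k ∈ s, c k * v k := by
      rw [Finset.mul_sum]
      refine Finset.sum_congr rfl fun k hk => ?_
      rw [Function.update_of_ne (by rintro rfl; exact hi hk)]
      ring
    rw [h1, hc, ← Int.coe_gcd, Int.gcd_eq_gcd_ab]
    ring

private lemma span_update_add {A : Type*} [AddCommGroup A] {n : ℕ} (u : Fin n → A)
    (i j : Fin n) (hij : i ≠ j) (q : ℤ) :
    Submodule.span ℤ (Set.range (Function.update u j (u j + q • u i)))
      = Submodule.span ℤ (Set.range u) := by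
  apply le_antisymm
  · rw [Submodule.span_le]
    rintro _ ⟨k, rfl⟩
    by_cases hk : k = j
    · subst hk
      rw [Function.update_self]
      exact Submodule.add_mem _ (Submodule.subset_span ⟨k, rfl⟩)
        (Submodule.smul_mem _ _ (Submodule.subset_span ⟨i, rfl⟩))
    · rw [Function.update_of_ne hk]
      exact Submodule.subset_span ⟨k, rfl⟩
  · rw [Submodule.span_le]
    rintro _ ⟨k, rfl⟩
    by_cases hk : k = j
    · subst hk
      have hm : (u k + q • u i) - q • u i
          ∈ Submodule.span ℤ (Set.range (Function.update u k (u k + q • u i))) :=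
        Submodule.sub_mem _
          (Submodule.subset_span ⟨k, Function.update_self _ _ _⟩)
          (Submodule.smul_mem _ _ (Submodule.subset_span ⟨i, Function.update_of_ne hij _ _⟩))
      simpa using hm
    · have h2 : u k = Function.update u j (u j + q • u i) k :=
        (Function.update_of_ne hk _ _).symm
      rw [h2]
      exact Submodule.subset_span ⟨k, rfl⟩

private lemma aux_span {A : Type*} [AddCommGroup A] :
    ∀ (N : ℕ) {n : ℕ} (a : Fin n → ℤ) (u : Fin n → A),
      (∑ i, (a i).natAbs) ≤ N → (∃ c : Fin n → ℤ, ∑ i, c i * a i = 1) →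
      ∃ (w : Fin n → A) (i₀ : Fin n),
        w i₀ = ∑ i, a i • u i ∧
        Submodule.span ℤ (Set.range w) = Submodule.span ℤ (Set.range u) := by
  intro N
  induction N with
  | zero =>
    rintro n a u hsum ⟨c, hc⟩
    have hz : ∀ i, a i = 0 := fun i => Int.natAbs_eq_zero.mp
      (Finset.sum_eq_zero_iff.mp (Nat.le_zero.mp hsum) i (Finset.mem_univ i))
    simp [hz] at hc
  | succ N ih =>
    rintro n a u hsum ⟨c, hc⟩
    by_cases h1 : ∃ i, a i = 1 ∨ a i = -1
    · obtain ⟨i, hi⟩ := h1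
      have haa : a i * a i = 1 := by rcases hi with h | h <;> rw [h] <;> norm_num
      refine ⟨Function.update u i (∑ k, a k • u k), i, Function.update_self _ _ _, ?_⟩
      apply le_antisymm
      · rw [Submodule.span_le]
        rintro _ ⟨k, rfl⟩
        by_cases hk : k = i
        · subst hk
          rw [Function.update_self]
          exact Submodule.sum_mem _ fun l _ =>
            Submodule.smul_mem _ _ (Submodule.subset_span ⟨l, rfl⟩)
        · rw [Function.update_of_ne hk]
          exact Submodule.subset_span ⟨k, rfl⟩
      · rw [Submodule.span_le]
        rintro _ ⟨k, rfl⟩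
        by_cases hk : k = i
        · subst hk
          have hsplit : a k • u k
              = (∑ l, a l • u l) - ∑ l ∈ Finset.univ.erase k, a l • u l := by
            rw [← Finset.add_sum_erase _ _ (Finset.mem_univ k)]
            abel
          have hmem : a k • u k
              ∈ Submodule.span ℤ (Set.range (Function.update u k (∑ l, a l • u l))) := by
            rw [hsplit]
            refine Submodule.sub_mem _
              (Submodule.subset_span ⟨k, Function.update_self _ _ _⟩)
              (Submodule.sum_mem _ fun l hl => Submodule.smul_mem _ _
                (Submodule.subset_span ⟨l, Function.update_of_ne (Finset.ne_of_mem_erase hl) _ _⟩))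
          have h3 : u k = a k • (a k • u k) := by rw [smul_smul, haa, one_smul]
          rw [h3]
          exact Submodule.smul_mem _ _ hmem
        · exact Submodule.subset_span ⟨k, Function.update_of_ne hk _ _⟩
    · push_neg at h1
      have hex : ∃ i, a i ≠ 0 := by
        by_contra h
        push_neg at h
        simp [h] at hc
      obtain ⟨i0, hi0⟩ := hex
      have hex2 : ∃ j, j ≠ i0 ∧ a j ≠ 0 := by
        by_contra h
        push_neg at h
        have hsingle : ∑ k, c k * a k = c i0 * a i0 := by
          apply Finset.sum_eq_single_of_mem i0 (Finset.mem_univ i0)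
          intro k _ hk
          rw [h k hk, mul_zero]
        rw [hsingle] at hc
        have : a i0 = 1 ∨ a i0 = -1 := Int.isUnit_iff.mp (IsUnit.of_mul_eq_one _
          (by rw [mul_comm]; exact hc))
        rcases this with h' | h'
        · exact (h1 i0).1 h'
        · exact (h1 i0).2 h'
      obtain ⟨j0, hj0ne, hj0⟩ := hex2
      have key : ∀ i j : Fin n, j ≠ i → a j ≠ 0 → (a j).natAbs ≤ (a i).natAbs →
          ∃ (w : Fin n → A) (i₀ : Fin n),
            w i₀ = ∑ k, a k • u k ∧
            Submodule.span ℤ (Set.range w) = Submodule.span ℤ (Set.range u) := by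
        intro i j hji hj hle
        set q := a i / a j with hq
        set r := a i % a j with hrdef
        have hr : r + a j * q = a i := Int.emod_add_mul_ediv (a i) (a j)
        set a' := Function.update a i r with ha'
        set u' := Function.update u j (u j + q • u i) with hu'
        have hlt : r.natAbs < (a j).natAbs := by
          have h0 : 0 ≤ r := Int.emod_nonneg _ hj
          have h2 : r < |a j| := by have := Int.emod_lt (a i) hj; rwa [Int.natCast_natAbs] at this
          have := Int.natAbs_lt_natAbs_of_nonneg_of_lt h0 h2
          rwa [Int.natAbs_abs] at this
        have hmeas : ∑ k, (a' k).natAbs ≤ N := by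
          have hlt2 : ∑ k, (a' k).natAbs < ∑ k, (a k).natAbs := by
            refine Finset.sum_lt_sum (fun k _ => ?_) ⟨i, Finset.mem_univ i, ?_⟩
            · by_cases hk : k = i
              · subst hk
                rw [ha', Function.update_self]
                exact le_of_lt (lt_of_lt_of_le hlt hle)
              · rw [ha', Function.update_of_ne hk]
            · rw [ha', Function.update_self]
              exact lt_of_lt_of_le hlt hle
          omega
        have hij : i ≠ j := hji.symm
        have hc' : ∑ k, Function.update c j (c j + c i * q) k * a' k = 1 := by
          have hout : ∀ k ∈ (Finset.univ : Finset (Fin n)), k ∉ ({i, j} : Finset (Fin n)) →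
              Function.update c j (c j + c i * q) k * a' k - c k * a k = 0 := by
            intro k _ hk
            have hki : k ≠ i := fun h' => hk (by simp [h'])
            have hkj : k ≠ j := fun h' => hk (by simp [h'])
            rw [ha', Function.update_of_ne hkj, Function.update_of_ne hki]
            ring
          have hdiff : ∑ k, (Function.update c j (c j + c i * q) k * a' k - c k * a k) = 0 := by
            rw [← Finset.sum_subset (Finset.subset_univ ({i, j} : Finset (Fin n))) hout,
              Finset.sum_pair hij]
            simp only [ha', Function.update_self, Function.update_of_ne hij,
              Function.update_of_ne hji]
            linear_combination (c i) * hr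
          have hsplit := Finset.sum_sub_distrib
            (f := fun k => Function.update c j (c j + c i * q) k * a' k)
            (g := fun k => c k * a k) (s := (Finset.univ : Finset (Fin n)))
          rw [hsplit, hc] at hdiff
          omega
        have hsum_eq : ∑ k, a' k • u' k = ∑ k, a k • u k := by
          have hout : ∀ k ∈ (Finset.univ : Finset (Fin n)), k ∉ ({i, j} : Finset (Fin n)) →
              a' k • u' k - a k • u k = 0 := by
            intro k _ hk
            have hki : k ≠ i := fun h' => hk (by simp [h'])
            have hkj : k ≠ j := fun h' => hk (by simp [h'])
            rw [ha', hu', Function.update_of_ne hkj, Function.update_of_ne hki, sub_self]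
          have hdiff : ∑ k, (a' k • u' k - a k • u k) = 0 := by
            rw [← Finset.sum_subset (Finset.subset_univ ({i, j} : Finset (Fin n))) hout,
              Finset.sum_pair hij]
            simp only [ha', hu', Function.update_self, Function.update_of_ne hij,
              Function.update_of_ne hji]
            rw [← hr, add_smul, smul_add, smul_smul]
            abel
          have hsplit := Finset.sum_sub_distrib
            (f := fun k => a' k • u' k)
            (g := fun k => a k • u k) (s := (Finset.univ : Finset (Fin n)))
          rw [hsplit, sub_eq_zero] at hdiff
          exact hdiff
        obtain ⟨w, i₀, hw, hspan⟩ := ih a' u' hmeas ⟨Function.update c j (c j + c i * q), hc'⟩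
        refine ⟨w, i₀, by rw [hw, hsum_eq], ?_⟩
        rw [hspan, hu', span_update_add u i j hij q]
      rcases le_total (a i0).natAbs (a j0).natAbs with h | h
      · exact key j0 i0 hj0ne.symm hi0 h
      · exact key i0 j0 hj0ne hj0 h

/-- Linear algebra lemma: if `v` is a primitive vector in the ℤ-span of
`u_1, …, u_n ⊆ ℤ^m`, then there are `v_2, …, v_n` with
`span(v, v_2, …, v_n) = span(u_1, …, u_n)`. -/
theorem primitive_in_span_extends (m n : ℕ) (u : Fin n → Fin m → ℤ) (v : Fin m → ℤ)
    (hv : Finset.univ.gcd v = 1) (hmem : v ∈ AddSubgroup.closure (Set.range u)) :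
    ∃ vs : Fin (n - 1) → Fin m → ℤ,
      AddSubgroup.closure ({v} ∪ Set.range vs) = AddSubgroup.closure (Set.range u) := by
  classical
  have hvspan : v ∈ Submodule.span ℤ (Set.range u) := by
    rw [← Submodule.span_int_eq_addSubgroupClosure] at hmem
    exact hmem
  obtain ⟨a, ha⟩ := (Submodule.mem_span_range_iff_exists_fun ℤ).mp hvspan
  obtain ⟨d, hd⟩ := bezout_finset Finset.univ v
  rw [hv] at hd
  have hbez : ∃ c : Fin n → ℤ, ∑ i, c i * a i = 1 := by
    refine ⟨fun i => ∑ j, d j * u i j, ?_⟩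
    have hvj : ∀ j, v j = ∑ i, a i * u i j := by
      intro j
      rw [← ha]
      simp [Finset.sum_apply]
    have hcalc : ∑ i, (∑ j, d j * u i j) * a i = ∑ j, d j * v j := by
      simp_rw [hvj, Finset.mul_sum, Finset.sum_mul]
      rw [Finset.sum_comm]
      exact Finset.sum_congr rfl fun j _ => Finset.sum_congr rfl fun i _ => by ring
    rw [hcalc, hd]
  obtain ⟨w, i₀, hw, hspan⟩ := aux_span (∑ i, (a i).natAbs) a u le_rfl hbez
  rw [ha] at hw
  cases n with
  | zero => exact i₀.elim0
  | succ k =>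
    refine ⟨w ∘ i₀.succAbove, ?_⟩
    have hr : ({v} : Set (Fin m → ℤ)) ∪ Set.range (w ∘ i₀.succAbove) = Set.range w := by
      ext x
      constructor
      · rintro (rfl | ⟨l, rfl⟩)
        · exact ⟨i₀, hw⟩
        · exact ⟨_, rfl⟩
      · rintro ⟨l, rfl⟩
        by_cases hl : l = i₀
        · subst hl
          left
          exact hw
        · obtain ⟨z, hz⟩ := Fin.exists_succAbove_eq hl
          right
          exact ⟨z, by rw [Function.comp_apply, hz]⟩
    rw [show Set.range (w ∘ i₀.succAbove : Fin (k + 1 - 1) → Fin m → ℤ)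
        = Set.range (w ∘ i₀.succAbove : Fin k → Fin m → ℤ) from rfl, hr,
      ← Submodule.span_int_eq_addSubgroupClosure, ← Submodule.span_int_eq_addSubgroupClosure,
      hspan]
end

section
/- In a nilpotent group G, if every generator a_i of a finite generating set has a power lying in the commutator subgroup G_2 = [G,G], then for every j, every element of the j-th lower central series term G_j has a finite power lying in G_{j+1}. -/
open scoped commutatorElement

section Aux

variable {G : Type*} [Group G]

/-- Central elements of exponent dividing `e` form a subgroup. -/
def centralTorsion (G : Type*) [Group G] (e : ℕ) : Subgroup G where
  carrier := {q | q ∈ Subgroup.center G ∧ q ^ e = 1}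
  one_mem' := ⟨Subgroup.one_mem _, one_pow e⟩
  mul_mem' := by
    rintro x y ⟨hx, hx'⟩ ⟨hy, hy'⟩
    refine ⟨mul_mem hx hy, ?_⟩
    have hc : Commute x y := (Subgroup.mem_center_iff.mp hx y).symm
    rw [hc.mul_pow, hx', hy', one_mul]
  inv_mem' := by
    rintro x ⟨hx, hx'⟩
    exact ⟨inv_mem hx, by rw [inv_pow, hx', inv_one]⟩

lemma central_mod (N : Subgroup G) [N.Normal] (s : G)
    (h : ∀ g : G, ⁅s, g⁆ ∈ N) :
    (QuotientGroup.mk' N) s ∈ Subgroup.center (G ⧸ N) := by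
  rw [Subgroup.mem_center_iff]
  intro z
  induction z using QuotientGroup.induction_on with
  | H g =>
    have h1 : ⁅(QuotientGroup.mk' N) s, (QuotientGroup.mk' N) g⁆ = 1 := by
      rw [← map_commutatorElement]
      exact (QuotientGroup.eq_one_iff _).mpr (h g)
    exact (commutatorElement_eq_one_iff_mul_comm.mp h1).symm

lemma comm_pow_of_central (a b : G)
    (hc : ∀ m : ℕ, ⁅a ^ m, b⁆ ∈ Subgroup.center G) :
    ∀ e : ℕ, ⁅a, b⁆ ^ e = ⁅a ^ e, b⁆ := by
  intro e
  induction e with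
  | zero => simp
  | succ e ih =>
    have hcent := Subgroup.mem_center_iff.mp (hc e)
    have h1 : ⁅a ^ (e + 1), b⁆ = a * ⁅a ^ e, b⁆ * b * a⁻¹ * b⁻¹ := by
      rw [commutatorElement_def, commutatorElement_def, pow_succ']
      group
    have h2 : a * ⁅a ^ e, b⁆ = ⁅a ^ e, b⁆ * a := hcent a
    have h3 : ⁅a ^ (e + 1), b⁆ = ⁅a ^ e, b⁆ * ⁅a, b⁆ := by
      rw [h1, h2, commutatorElement_def]
      group
    rw [pow_succ, ih, h3]

/-- If every element of a generating set of `H` is central mod `N` and has `e`-th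
power in `N`, then every element of `H` has `e`-th power in `N`. -/
lemma pow_mem_of_closure (N : Subgroup G) [N.Normal] (S : Set G) (e : ℕ)
    (hcent : ∀ s ∈ S, ∀ g : G, ⁅s, g⁆ ∈ N)
    (htor : ∀ s ∈ S, s ^ e ∈ N) :
    ∀ g ∈ Subgroup.closure S, g ^ e ∈ N := by
  intro g hg
  have hle : Subgroup.closure S ≤ (centralTorsion (G ⧸ N) e).comap (QuotientGroup.mk' N) := by
    apply Subgroup.closure_le _ |>.mpr
    intro s hs
    refine ⟨central_mod N s (hcent s hs), ?_⟩
    rw [← map_pow]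
    exact (QuotientGroup.eq_one_iff _).mpr (htor s hs)
  have := (hle hg).2
  rw [← map_pow] at this
  exact (QuotientGroup.eq_one_iff _).mp this

end Aux

/-- In a nilpotent group, if every member of a finite generating set has a positive
power in the commutator subgroup `[G,G] = Subgroup.lowerCentralSeries (⊤ : Subgroup G) 1`, then for every `j`
every element of `Subgroup.lowerCentralSeries (⊤ : Subgroup G) j` has a positive power in
`Subgroup.lowerCentralSeries (⊤ : Subgroup G) (j+1)`. -/
theorem pow_in_next_lcs_of_generators_pow_in_commutator
    (G : Type*) [Group G] [Group.IsNilpotent G] (n : ℕ) (a : Fin n → G)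
    (hgen : Subgroup.closure (Set.range a) = ⊤)
    (hpow : ∀ i, ∃ k : ℕ, 0 < k ∧ a i ^ k ∈ Subgroup.lowerCentralSeries (⊤ : Subgroup G) 1) :
    ∀ j : ℕ, ∀ g ∈ Subgroup.lowerCentralSeries (⊤ : Subgroup G) j,
      ∃ k : ℕ, 0 < k ∧ g ^ k ∈ Subgroup.lowerCentralSeries (⊤ : Subgroup G) (j + 1) := by
  classical
  choose k hk1 hk2 using hpow
  set e : ℕ := ∏ i, k i with he_def
  have he : 0 < e := Finset.prod_pos (fun i _ => hk1 i)
  have hae : ∀ i, a i ^ e ∈ Subgroup.lowerCentralSeries (⊤ : Subgroup G) 1 := by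
    intro i
    obtain ⟨m, hm⟩ := Finset.dvd_prod_of_mem k (Finset.mem_univ i)
    rw [he_def, hm, pow_mul]
    exact Subgroup.pow_mem _ (hk2 i) m
  -- the main claim with uniform exponent e, by induction on j
  suffices h : ∀ j : ℕ, ∀ g ∈ Subgroup.lowerCentralSeries (⊤ : Subgroup G) j, g ^ e ∈ Subgroup.lowerCentralSeries (⊤ : Subgroup G) (j + 1) by
    intro j g hg
    exact ⟨e, he, h j g hg⟩
  intro j
  induction j with
  | zero =>
    -- base case: every g has g^e ∈ [G,G]
    have h1 : Subgroup.lowerCentralSeries (⊤ : Subgroup G) 1 = ⁅(⊤ : Subgroup G), ⊤⁆ := rfl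
    intro g hg
    have : g ∈ Subgroup.closure (Set.range a) := by rw [hgen]; trivial
    refine pow_mem_of_closure (Subgroup.lowerCentralSeries (⊤ : Subgroup G) 1) (Set.range a) e ?_ ?_ g this
    · rintro s ⟨i, rfl⟩ h
      rw [h1]
      exact Subgroup.commutator_mem_commutator (Subgroup.mem_top _) (Subgroup.mem_top _)
    · rintro s ⟨i, rfl⟩
      exact hae i
  | succ j ih =>
    -- step: lcs (j+1) is generated by commutators ⁅x, y⁆ with x ∈ lcs j
    have hsucc : Subgroup.lowerCentralSeries (⊤ : Subgroup G) (j + 1) = ⁅Subgroup.lowerCentralSeries (⊤ : Subgroup G) j, (⊤ : Subgroup G)⁆ := rfl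
    have hsucc2 :
        Subgroup.lowerCentralSeries (⊤ : Subgroup G) (j + 2) = ⁅Subgroup.lowerCentralSeries (⊤ : Subgroup G) (j + 1), (⊤ : Subgroup G)⁆ := rfl
    set S : Set G :=
      {g | ∃ g₁ ∈ Subgroup.lowerCentralSeries (⊤ : Subgroup G) j, ∃ g₂ ∈ (⊤ : Subgroup G), ⁅g₁, g₂⁆ = g} with hS
    have hclS : Subgroup.lowerCentralSeries (⊤ : Subgroup G) (j + 1) = Subgroup.closure S := by
      rw [hsucc, Subgroup.commutator_def]
    intro g hg
    rw [hclS] at hg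
    refine pow_mem_of_closure (Subgroup.lowerCentralSeries (⊤ : Subgroup G) (j + 2)) S e ?_ ?_ g hg
    · rintro s ⟨x, hx, y, -, rfl⟩ h
      rw [hsucc2]
      exact Subgroup.commutator_mem_commutator
        (hsucc ▸ Subgroup.commutator_mem_commutator hx (Subgroup.mem_top y)) (Subgroup.mem_top h)
    · rintro s ⟨x, hx, y, -, rfl⟩
      have hcentral : ∀ u ∈ Subgroup.lowerCentralSeries (⊤ : Subgroup G) (j + 1),
          (QuotientGroup.mk' (Subgroup.lowerCentralSeries (⊤ : Subgroup G) (j + 2))) u ∈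
            Subgroup.center (G ⧸ Subgroup.lowerCentralSeries (⊤ : Subgroup G) (j + 2)) := by
        intro u hu
        apply central_mod
        intro g'
        rw [hsucc2]
        exact Subgroup.commutator_mem_commutator hu (Subgroup.mem_top g')
      set π := QuotientGroup.mk' (Subgroup.lowerCentralSeries (⊤ : Subgroup G) (j + 2)) with hπ
      have hc : ∀ m : ℕ, ⁅(π x) ^ m, π y⁆ ∈
          Subgroup.center (G ⧸ Subgroup.lowerCentralSeries (⊤ : Subgroup G) (j + 2)) := by
        intro m
        rw [← map_pow, ← map_commutatorElement]
        exact hcentral _ (hsucc ▸ Subgroup.commutator_mem_commutator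
          (Subgroup.pow_mem _ hx m) (Subgroup.mem_top y))
      have hkey : (π ⁅x, y⁆) ^ e = π ⁅x ^ e, y⁆ := by
        rw [map_commutatorElement, comm_pow_of_central (π x) (π y) hc e,
          ← map_pow, map_commutatorElement]
      have hmem : ⁅x ^ e, y⁆ ∈ Subgroup.lowerCentralSeries (⊤ : Subgroup G) (j + 2) := by
        rw [hsucc2]
        exact Subgroup.commutator_mem_commutator (ih x hx) (Subgroup.mem_top y)
      have h1 : (π ⁅x, y⁆) ^ e = 1 := by
        rw [hkey]
        exact (QuotientGroup.eq_one_iff _).mpr hmem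
      rw [← map_pow] at h1
      exact (QuotientGroup.eq_one_iff _).mp h1
end
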